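/- Let n be a positive integer and let α, γ be complex numbers. Define the binary operation A ∘ B = α(AB − BA) + γ((tr B)·A − (tr A)·B) on n×n complex matrices. Then for all n×n complex matrices A, B, C, D one has ((A∘B)∘C)∘D + ((C∘B)∘D)∘A + ((C∘D)∘A)∘B + ((A∘D)∘B)∘C + ((C∘A)∘B)∘D + ((D∘C)∘B)∘A + ((A∘C)∘D)∘B + ((B∘A)∘D)∘C + ((B∘C)∘A)∘D + ((B∘D)∘C)∘A + ((D∘A)∘C)∘B + ((D∘B)∘A)∘C = 0. -/
import Mathlib

open Matrix

noncomputable def circ {n : ℕ} (α γ : ℂ) (A B : Matrix (Fin n) (Fin n) ℂ) :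
    Matrix (Fin n) (Fin n) ℂ :=
  α • (A * B - B * A) + γ • (B.trace • A - A.trace • B)

lemma trace_circ {n : ℕ} (α γ : ℂ) (A B : Matrix (Fin n) (Fin n) ℂ) :
    (circ α γ A B).trace = 0 := by
  simp [circ, trace_mul_comm A B, mul_comm]

lemma step {n : ℕ} (α γ : ℂ) (P Z : Matrix (Fin n) (Fin n) ℂ) (hP : P.trace = 0) :
    circ α γ P Z = α • (P * Z - Z * P) + (γ * Z.trace) • P := by
  simp [circ, hP, smul_smul, mul_comm]

lemma step2 {n : ℕ} (α γ : ℂ) (X Y Z : Matrix (Fin n) (Fin n) ℂ) :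
    circ α γ (circ α γ X Y) Z =
      α • (circ α γ X Y * Z - Z * circ α γ X Y) + (γ * Z.trace) • circ α γ X Y :=
  step α γ _ _ (trace_circ _ _ _ _)

lemma step3 {n : ℕ} (α γ : ℂ) (X Y Z W : Matrix (Fin n) (Fin n) ℂ) :
    circ α γ (circ α γ (circ α γ X Y) Z) W =
      α • (circ α γ (circ α γ X Y) Z * W - W * circ α γ (circ α γ X Y) Z) +
        (γ * W.trace) • circ α γ (circ α γ X Y) Z :=
  step α γ _ _ (trace_circ _ _ _ _)

set_option maxHeartbeats 4000000 in
theorem stmt_0 (n : ℕ) (hn : 0 < n) (α γ : ℂ)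
    (A B C D : Matrix (Fin n) (Fin n) ℂ) :
    circ α γ (circ α γ (circ α γ A B) C) D + circ α γ (circ α γ (circ α γ C B) D) A +
    circ α γ (circ α γ (circ α γ C D) A) B + circ α γ (circ α γ (circ α γ A D) B) C +
    circ α γ (circ α γ (circ α γ C A) B) D + circ α γ (circ α γ (circ α γ D C) B) A +
    circ α γ (circ α γ (circ α γ A C) D) B + circ α γ (circ α γ (circ α γ B A) D) C +
    circ α γ (circ α γ (circ α γ B C) A) D + circ α γ (circ α γ (circ α γ B D) C) A +
    circ α γ (circ α γ (circ α γ D A) C) B + circ α γ (circ α γ (circ α γ D B) A) C = 0 := by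
  simp only [step3]
  simp only [step2]
  simp only [circ]
  simp only [smul_add, smul_sub, smul_smul, mul_smul_comm, smul_mul_assoc,
    mul_sub, sub_mul, mul_add, add_mul, mul_assoc]
  module
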